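/- Let n ≥ 1 and let z_1, …, z_n be real numbers with ∑_{i=1}^n z_i = 0. Set p_r = ∑_i z_i^r. Then the sum of (z_i - z_j)^2 (z_j - z_k)^2 (z_k - z_l)^2 over all ordered quadruples (i, j, k, l) of pairwise distinct indices in {1, …, n} equals (4n-6)·p_2^3 - 2(n-5)(n-2)·p_3^2 + (4n^2 - 24n + 30)·p_2·p_4 - 2n(n-1)·p_6. -/
import Mathlib

open Finset

theorem aux_hsum (n : ℕ) (z : Fin n → ℝ) (hz : ∑ i, z i = 0)
    (p₂ p₃ p₄ q5 p₆ : ℝ)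
    (hp₂ : p₂ = ∑ i, z i ^ 2) (hp₃ : p₃ = ∑ i, z i ^ 3)
    (hp₄ : p₄ = ∑ i, z i ^ 4) (hq5 : q5 = ∑ i, z i ^ 5) (hp₆ : p₆ = ∑ i, z i ^ 6)
    (c0 c1 c2 c3 c4 c5 c6 : ℝ) :
    ∑ x : Fin n, (c0 + c1 * z x + c2 * z x ^ 2 + c3 * z x ^ 3 + c4 * z x ^ 4 + c5 * z x ^ 5 + c6 * z x ^ 6)
      = (n:ℝ) * c0 + c2 * p₂ + c3 * p₃ + c4 * p₄ + c5 * q5 + c6 * p₆ := by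
  simp only [Finset.sum_add_distrib, ← Finset.mul_sum, Finset.sum_const, Finset.card_univ,
    Fintype.card_fin, nsmul_eq_mul, hz, mul_zero, add_zero]
  rw [hp₂, hp₃, hp₄, hp₆, hq5]

theorem auxA (n : ℕ) (z : Fin n → ℝ) :
    (∑ f : Fin 4 ↪ Fin n,
        (z (f 0) - z (f 1)) ^ 2 * (z (f 1) - z (f 2)) ^ 2 * (z (f 2) - z (f 3)) ^ 2)
      = ∑ t ∈ (univ : Finset (Fin n × Fin n × Fin n × Fin n)).filter
          (fun t => t.1 ≠ t.2.1 ∧ t.1 ≠ t.2.2.1 ∧ t.1 ≠ t.2.2.2 ∧ t.2.1 ≠ t.2.2.1 ∧ t.2.1 ≠ t.2.2.2 ∧ t.2.2.1 ≠ t.2.2.2),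
          (z t.1 - z t.2.1) ^ 2 * (z t.2.1 - z t.2.2.1) ^ 2 * (z t.2.2.1 - z t.2.2.2) ^ 2 := by
  refine Finset.sum_bij' (fun f _ => (f 0, f 1, f 2, f 3))
    (fun t ht => ⟨![t.1, t.2.1, t.2.2.1, t.2.2.2], ?_⟩) ?_ ?_ ?_ ?_ ?_
  · simp only [Finset.mem_filter] at ht
    obtain ⟨-, h1, h2, h3, h4, h5, h6⟩ := ht
    intro u v huv
    fin_cases u <;> fin_cases v <;> simp_all
  · intro f _
    simp only [Finset.mem_filter, Finset.mem_univ, true_and]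
    exact ⟨f.injective.ne (by decide), f.injective.ne (by decide), f.injective.ne (by decide),
      f.injective.ne (by decide), f.injective.ne (by decide), f.injective.ne (by decide)⟩
  · intro t ht; exact Finset.mem_univ _
  · intro f _
    ext x
    fin_cases x <;> rfl
  · intro t ht; rfl
  · intro f _; rfl

theorem auxB (n : ℕ) (z : Fin n → ℝ) :
    (∑ t ∈ (univ : Finset (Fin n × Fin n × Fin n × Fin n)).filter
          (fun t => t.1 ≠ t.2.1 ∧ t.1 ≠ t.2.2.1 ∧ t.1 ≠ t.2.2.2 ∧ t.2.1 ≠ t.2.2.1 ∧ t.2.1 ≠ t.2.2.2 ∧ t.2.2.1 ≠ t.2.2.2),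
          (z t.1 - z t.2.1) ^ 2 * (z t.2.1 - z t.2.2.1) ^ 2 * (z t.2.2.1 - z t.2.2.2) ^ 2)
      = ∑ i, ∑ j ∈ univ.erase i, ∑ k ∈ (univ.erase i).erase j,
          ∑ l ∈ ((univ.erase i).erase j).erase k,
            (z i - z j) ^ 2 * (z j - z k) ^ 2 * (z k - z l) ^ 2 := by
  have er : ∀ (s : Finset (Fin n)) (a : Fin n) (f : Fin n → ℝ),
      ∑ x ∈ s.erase a, f x = ∑ x ∈ s, if x ≠ a then f x else 0 := fun s a f => by
    rw [← Finset.filter_ne', Finset.sum_filter]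
  rw [Finset.sum_filter, Fintype.sum_prod_type]
  simp only [er, Fintype.sum_prod_type]
  refine Finset.sum_congr rfl fun i _ => Finset.sum_congr rfl fun j _ => ?_
  by_cases hji : j = i
  · simp [hji]
  · rw [if_pos (Ne.intro hji)]
    refine Finset.sum_congr rfl fun k _ => ?_
    by_cases hki : k = i
    · simp [hki, hji]
    · by_cases hkj : k = j
      · simp [hkj, hji]
      · rw [if_pos (Ne.intro hkj), if_pos (Ne.intro hki)]
        refine Finset.sum_congr rfl fun l _ => ?_
        by_cases hli : l = i
        · simp [hli, hji, hki]
        · by_cases hlj : l = j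
          · simp [hlj, hji, hkj]
          · by_cases hlk : l = k
            · simp [hlk, hki, hkj]
            · rw [if_pos ⟨Ne.symm (Ne.intro hji), Ne.symm (Ne.intro hki), Ne.symm (Ne.intro hli),
                Ne.symm (Ne.intro hkj), Ne.symm (Ne.intro hlj), Ne.symm (Ne.intro hlk)⟩,
                if_pos (Ne.intro hli), if_pos (Ne.intro hlj), if_pos (Ne.intro hlk)]

set_option maxHeartbeats 1000000 in
theorem aux3 (n : ℕ) (z : Fin n → ℝ) (hz : ∑ i, z i = 0)
    (p₂ p₃ p₄ q5 p₆ : ℝ)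
    (hp₂ : p₂ = ∑ i, z i ^ 2) (hp₃ : p₃ = ∑ i, z i ^ 3)
    (hp₄ : p₄ = ∑ i, z i ^ 4) (hq5 : q5 = ∑ i, z i ^ 5) (hp₆ : p₆ = ∑ i, z i ^ 6)
    (i j k : Fin n) (hji : j ≠ i) (hki : k ≠ i) (hkj : k ≠ j) :
    ∑ l ∈ ((univ.erase i).erase j).erase k,
        (z i - z j) ^ 2 * (z j - z k) ^ 2 * (z k - z l) ^ 2
      = (1:ℝ) * z j ^ 2 * z k ^ 2 * p₂ + (-2:ℝ) * z j ^ 2 * z k ^ 4 + (1:ℝ) * z j ^ 2 * z k ^ 4 * (n:ℝ) + (-2:ℝ) * z j ^ 3 * z k * p₂ + (6:ℝ) * z j ^ 3 * z k ^ 3 + (-2:ℝ) * z j ^ 3 * z k ^ 3 * (n:ℝ) + (1:ℝ) * z j ^ 4 * p₂ + (-7:ℝ) * z j ^ 4 * z k ^ 2 + (1:ℝ) * z j ^ 4 * z k ^ 2 * (n:ℝ) + (4:ℝ) * z j ^ 5 * z k + (-1:ℝ) * z j ^ 6 + (-2:ℝ) * z i * z j * z k ^ 2 * p₂ + (4:ℝ)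 * z i * z j * z k ^ 4 + (-2:ℝ) * z i * z j * z k ^ 4 * (n:ℝ) + (4:ℝ) * z i * z j ^ 2 * z k * p₂ + (-10:ℝ) * z i * z j ^ 2 * z k ^ 3 + (4:ℝ) * z i * z j ^ 2 * z k ^ 3 * (n:ℝ) + (-2:ℝ) * z i * z j ^ 3 * p₂ + (10:ℝ) * z i * z j ^ 3 * z k ^ 2 + (-2:ℝ) * z i * z j ^ 3 * z k ^ 2 * (n:ℝ) + (-6:ℝ) * z i * z j ^ 4 * z k + (2:ℝ) * z i * z j ^ 5 + (1:ℝ) * z i ^ 2 * z k ^ 2 * p₂ + (-2:ℝ) * z i ^ 2 * z k ^ 4 + (1:ℝ) * z i ^ 2 * z k ^ 4 * (n:ℝ) + (-2:ℝ) * z i ^ 2 * z j * z k * p₂ + (2:ℝ) * z i ^ 2 * z j * z k ^ 3 + (-2:ℝ) * z i ^ 2 * z j * z k ^ 3 * (n:ℝ) + (1:ℝ) * z i ^ 2 * z j ^ 2 * p₂ + (1:ℝ) * z i ^ 2 * z j ^ 2 * z k ^ 2 * (n:ℝ) + (2:ℝ) * z i ^ 2 * z j ^ 3 * z k + (-2:ℝ)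 * z i ^ 2 * z j ^ 4 + (2:ℝ) * z i ^ 3 * z k ^ 3 + (-2:ℝ) * z i ^ 3 * z j * z k ^ 2 + (-2:ℝ) * z i ^ 3 * z j ^ 2 * z k + (2:ℝ) * z i ^ 3 * z j ^ 3 + (-1:ℝ) * z i ^ 4 * z k ^ 2 + (2:ℝ) * z i ^ 4 * z j * z k + (-1:ℝ) * z i ^ 4 * z j ^ 2 := by
  rw [Finset.sum_erase_eq_sub (by simp [Finset.mem_erase, hki, hkj] : k ∈ (univ.erase i).erase j),
    Finset.sum_erase_eq_sub (by simp [Finset.mem_erase, hji] : j ∈ univ.erase i),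
    Finset.sum_erase_eq_sub (Finset.mem_univ i)]
  have e : (∑ l : Fin n, (z i - z j) ^ 2 * (z j - z k) ^ 2 * (z k - z l) ^ 2)
      = ∑ x : Fin n, (((1:ℝ) * z j ^ 2 * z k ^ 4 + (-2:ℝ) * z j ^ 3 * z k ^ 3 + (1:ℝ) * z j ^ 4 * z k ^ 2 + (-2:ℝ) * z i * z j * z k ^ 4 + (4:ℝ) * z i * z j ^ 2 * z k ^ 3 + (-2:ℝ) * z i * z j ^ 3 * z k ^ 2 + (1:ℝ) * z i ^ 2 * z k ^ 4 + (-2:ℝ) * z i ^ 2 * z j * z k ^ 3 + (1:ℝ) * z i ^ 2 * z j ^ 2 * z k ^ 2) + ((-2:ℝ) * z j ^ 2 * z k ^ 3 + (4:ℝ) * z j ^ 3 * z k ^ 2 + (-2:ℝ) * z j ^ 4 * z k + (4:ℝ) * z i * z j * z k ^ 3 + (-8:ℝ) * z i * z j ^ 2 * z k ^ 2 + (4:ℝ) * z i * z j ^ 3 * z k + (-2:ℝ) * z i ^ 2 * z k ^ 3 + (4:ℝ) * z i ^ 2 * z j * z k ^ 2 + (-2:ℝ) * z i ^ 2 * z j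 ^ 2 * z k) * z x + ((1:ℝ) * z j ^ 2 * z k ^ 2 + (-2:ℝ) * z j ^ 3 * z k + (1:ℝ) * z j ^ 4 + (-2:ℝ) * z i * z j * z k ^ 2 + (4:ℝ) * z i * z j ^ 2 * z k + (-2:ℝ) * z i * z j ^ 3 + (1:ℝ) * z i ^ 2 * z k ^ 2 + (-2:ℝ) * z i ^ 2 * z j * z k + (1:ℝ) * z i ^ 2 * z j ^ 2) * z x ^ 2 + ((0:ℝ)) * z x ^ 3 + ((0:ℝ)) * z x ^ 4 + ((0:ℝ)) * z x ^ 5 + ((0:ℝ)) * z x ^ 6) := Finset.sum_congr rfl fun x _ => by ring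
  rw [e, aux_hsum n z hz p₂ p₃ p₄ q5 p₆ hp₂ hp₃ hp₄ hq5 hp₆]
  ring

set_option maxHeartbeats 1000000 in
theorem aux2 (n : ℕ) (z : Fin n → ℝ) (hz : ∑ i, z i = 0)
    (p₂ p₃ p₄ q5 p₆ : ℝ)
    (hp₂ : p₂ = ∑ i, z i ^ 2) (hp₃ : p₃ = ∑ i, z i ^ 3)
    (hp₄ : p₄ = ∑ i, z i ^ 4) (hq5 : q5 = ∑ i, z i ^ 5) (hp₆ : p₆ = ∑ i, z i ^ 6)
    (i j : Fin n) (hji : j ≠ i) :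
    (∑ k ∈ (univ.erase i).erase j, ((1:ℝ) * z j ^ 2 * z k ^ 2 * p₂ + (-2:ℝ) * z j ^ 2 * z k ^ 4 + (1:ℝ) * z j ^ 2 * z k ^ 4 * (n:ℝ) + (-2:ℝ) * z j ^ 3 * z k * p₂ + (6:ℝ) * z j ^ 3 * z k ^ 3 + (-2:ℝ) * z j ^ 3 * z k ^ 3 * (n:ℝ) + (1:ℝ) * z j ^ 4 * p₂ + (-7:ℝ) * z j ^ 4 * z k ^ 2 + (1:ℝ) * z j ^ 4 * z k ^ 2 * (n:ℝ) + (4:ℝ) * z j ^ 5 * z k + (-1:ℝ) * z j ^ 6 + (-2:ℝ) * z i * z j * z k ^ 2 * p₂ + (4:ℝ) * z i * z j * z k ^ 4 + (-2:ℝ) * z i * z j * z k ^ 4 * (n:ℝ) + (4:ℝ) * z i * z j ^ 2 * z k * p₂ + (-10:ℝ) * z i * z j ^ 2 * z k ^ 3 + (4:ℝ) * z i * z j ^ 2 * z k ^ 3 * (n:ℝ) + (-2:ℝ) * z i * z j ^ 3 * p₂ + (10:ℝ) * z i * z j ^ 3 * z k ^ 2 + (-2:ℝ) * z i * z j ^ 3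 * z k ^ 2 * (n:ℝ) + (-6:ℝ) * z i * z j ^ 4 * z k + (2:ℝ) * z i * z j ^ 5 + (1:ℝ) * z i ^ 2 * z k ^ 2 * p₂ + (-2:ℝ) * z i ^ 2 * z k ^ 4 + (1:ℝ) * z i ^ 2 * z k ^ 4 * (n:ℝ) + (-2:ℝ) * z i ^ 2 * z j * z k * p₂ + (2:ℝ) * z i ^ 2 * z j * z k ^ 3 + (-2:ℝ) * z i ^ 2 * z j * z k ^ 3 * (n:ℝ) + (1:ℝ) * z i ^ 2 * z j ^ 2 * p₂ + (1:ℝ) * z i ^ 2 * z j ^ 2 * z k ^ 2 * (n:ℝ) + (2:ℝ) * z i ^ 2 * z j ^ 3 * z k + (-2:ℝ) * z i ^ 2 * z j ^ 4 + (2:ℝ) * z i ^ 3 * z k ^ 3 + (-2:ℝ) * z i ^ 3 * z j * z k ^ 2 + (-2:ℝ) * z i ^ 3 * z j ^ 2 * z k + (2:ℝ) * z i ^ 3 * z j ^ 3 + (-1:ℝ) * z i ^ 4 * z k ^ 2 + (2:ℝ) * z i ^ 4 * z j * z k + (-1:ℝ) * z i ^ 4 * z j ^ 2))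
      = (-2:ℝ) * z j ^ 2 * p₄ + (1:ℝ) * z j ^ 2 * p₂ ^ 2 + (1:ℝ) * z j ^ 2 * (n:ℝ) * p₄ + (6:ℝ) * z j ^ 3 * p₃ + (-2:ℝ) * z j ^ 3 * (n:ℝ) * p₃ + (-8:ℝ) * z j ^ 4 * p₂ + (2:ℝ) * z j ^ 4 * (n:ℝ) * p₂ + (1:ℝ) * z j ^ 6 + (-1:ℝ) * z j ^ 6 * (n:ℝ) + (4:ℝ) * z i * z j * p₄ + (-2:ℝ) * z i * z j * p₂ ^ 2 + (-2:ℝ) * z i * z j * (n:ℝ) * p₄ + (-10:ℝ) * z i * z j ^ 2 * p₃ + (4:ℝ) * z i * z j ^ 2 * (n:ℝ) * p₃ + (14:ℝ) * z i * z j ^ 3 * p₂ + (-4:ℝ) * z i * z j ^ 3 * (n:ℝ) * p₂ + (-6:ℝ) * z i * z j ^ 5 + (2:ℝ) * z i * z j ^ 5 * (n:ℝ) + (-2:ℝ) * z i ^ 2 * p₄ + (1:ℝ) * z i ^ 2 * p₂ ^ 2 + (1:ℝ) * z i ^ 2 * (n:ℝ) * p₄ + (2:ℝ) * z i ^ 2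 * z j * p₃ + (-2:ℝ) * z i ^ 2 * z j * (n:ℝ) * p₃ + (-6:ℝ) * z i ^ 2 * z j ^ 2 * p₂ + (2:ℝ) * z i ^ 2 * z j ^ 2 * (n:ℝ) * p₂ + (15:ℝ) * z i ^ 2 * z j ^ 4 + (-3:ℝ) * z i ^ 2 * z j ^ 4 * (n:ℝ) + (2:ℝ) * z i ^ 3 * p₃ + (2:ℝ) * z i ^ 3 * z j * p₂ + (-20:ℝ) * z i ^ 3 * z j ^ 3 + (6:ℝ) * z i ^ 3 * z j ^ 3 * (n:ℝ) + (-2:ℝ) * z i ^ 4 * p₂ + (15:ℝ) * z i ^ 4 * z j ^ 2 + (-7:ℝ) * z i ^ 4 * z j ^ 2 * (n:ℝ) + (-6:ℝ) * z i ^ 5 * z j + (4:ℝ) * z i ^ 5 * z j * (n:ℝ) + (1:ℝ) * z i ^ 6 + (-1:ℝ) * z i ^ 6 * (n:ℝ) := by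
  rw [Finset.sum_erase_eq_sub (by simp [Finset.mem_erase, hji] : j ∈ univ.erase i),
    Finset.sum_erase_eq_sub (Finset.mem_univ i)]
  have e : (∑ k : Fin n, ((1:ℝ) * z j ^ 2 * z k ^ 2 * p₂ + (-2:ℝ) * z j ^ 2 * z k ^ 4 + (1:ℝ) * z j ^ 2 * z k ^ 4 * (n:ℝ) + (-2:ℝ) * z j ^ 3 * z k * p₂ + (6:ℝ) * z j ^ 3 * z k ^ 3 + (-2:ℝ) * z j ^ 3 * z k ^ 3 * (n:ℝ) + (1:ℝ) * z j ^ 4 * p₂ + (-7:ℝ) * z j ^ 4 * z k ^ 2 + (1:ℝ) * z j ^ 4 * z k ^ 2 * (n:ℝ) + (4:ℝ) * z j ^ 5 * z k + (-1:ℝ) * z j ^ 6 + (-2:ℝ) * z i * z j * z k ^ 2 * p₂ + (4:ℝ) * z i * z j * z k ^ 4 + (-2:ℝ) * z i * z j * z k ^ 4 * (n:ℝ) + (4:ℝ) * z i * z j ^ 2 * z k * p₂ + (-10:ℝ) * z i * z j ^ 2 * z k ^ 3 + (4:ℝ) * z i * z j ^ 2 * z k ^ 3 * (n:ℝ) + (-2:ℝ)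 * z i * z j ^ 3 * p₂ + (10:ℝ) * z i * z j ^ 3 * z k ^ 2 + (-2:ℝ) * z i * z j ^ 3 * z k ^ 2 * (n:ℝ) + (-6:ℝ) * z i * z j ^ 4 * z k + (2:ℝ) * z i * z j ^ 5 + (1:ℝ) * z i ^ 2 * z k ^ 2 * p₂ + (-2:ℝ) * z i ^ 2 * z k ^ 4 + (1:ℝ) * z i ^ 2 * z k ^ 4 * (n:ℝ) + (-2:ℝ) * z i ^ 2 * z j * z k * p₂ + (2:ℝ) * z i ^ 2 * z j * z k ^ 3 + (-2:ℝ) * z i ^ 2 * z j * z k ^ 3 * (n:ℝ) + (1:ℝ) * z i ^ 2 * z j ^ 2 * p₂ + (1:ℝ) * z i ^ 2 * z j ^ 2 * z k ^ 2 * (n:ℝ) + (2:ℝ) * z i ^ 2 * z j ^ 3 * z k + (-2:ℝ) * z i ^ 2 * z j ^ 4 + (2:ℝ) * z i ^ 3 * z k ^ 3 + (-2:ℝ) * z i ^ 3 * z j * z k ^ 2 + (-2:ℝ) * z i ^ 3 * z j ^ 2 * z k + (2:ℝ) * z i ^ 3 * z j ^ 3 + (-1:ℝ) * z i ^ 4 *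 z k ^ 2 + (2:ℝ) * z i ^ 4 * z j * z k + (-1:ℝ) * z i ^ 4 * z j ^ 2))
      = ∑ x : Fin n, (((1:ℝ) * z j ^ 4 * p₂ + (-1:ℝ) * z j ^ 6 + (-2:ℝ) * z i * z j ^ 3 * p₂ + (2:ℝ) * z i * z j ^ 5 + (1:ℝ) * z i ^ 2 * z j ^ 2 * p₂ + (-2:ℝ) * z i ^ 2 * z j ^ 4 + (2:ℝ) * z i ^ 3 * z j ^ 3 + (-1:ℝ) * z i ^ 4 * z j ^ 2) + ((-2:ℝ) * z j ^ 3 * p₂ + (4:ℝ) * z j ^ 5 + (4:ℝ) * z i * z j ^ 2 * p₂ + (-6:ℝ) * z i * z j ^ 4 + (-2:ℝ) * z i ^ 2 * z j * p₂ + (2:ℝ) * z i ^ 2 * z j ^ 3 + (-2:ℝ) * z i ^ 3 * z j ^ 2 + (2:ℝ) * z i ^ 4 * z j) * z x + ((1:ℝ) * z j ^ 2 * p₂ + (-7:ℝ) * z j ^ 4 + (1:ℝ) * z j ^ 4 * (n:ℝ) + (-2:ℝ) * z i * z j * p₂ + (10:ℝ) * z i * z j ^ 3 + (-2:ℝ)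 * z i * z j ^ 3 * (n:ℝ) + (1:ℝ) * z i ^ 2 * p₂ + (1:ℝ) * z i ^ 2 * z j ^ 2 * (n:ℝ) + (-2:ℝ) * z i ^ 3 * z j + (-1:ℝ) * z i ^ 4) * z x ^ 2 + ((6:ℝ) * z j ^ 3 + (-2:ℝ) * z j ^ 3 * (n:ℝ) + (-10:ℝ) * z i * z j ^ 2 + (4:ℝ) * z i * z j ^ 2 * (n:ℝ) + (2:ℝ) * z i ^ 2 * z j + (-2:ℝ) * z i ^ 2 * z j * (n:ℝ) + (2:ℝ) * z i ^ 3) * z x ^ 3 + ((-2:ℝ) * z j ^ 2 + (1:ℝ) * z j ^ 2 * (n:ℝ) + (4:ℝ) * z i * z j + (-2:ℝ) * z i * z j * (n:ℝ) + (-2:ℝ) * z i ^ 2 + (1:ℝ) * z i ^ 2 * (n:ℝ)) * z x ^ 4 + ((0:ℝ)) * z x ^ 5 + ((0:ℝ)) * z x ^ 6) := Finset.sum_congr rfl fun x _ => by ring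
  rw [e, aux_hsum n z hz p₂ p₃ p₄ q5 p₆ hp₂ hp₃ hp₄ hq5 hp₆]
  ring

set_option maxHeartbeats 1000000 in
theorem aux1 (n : ℕ) (z : Fin n → ℝ) (hz : ∑ i, z i = 0)
    (p₂ p₃ p₄ q5 p₆ : ℝ)
    (hp₂ : p₂ = ∑ i, z i ^ 2) (hp₃ : p₃ = ∑ i, z i ^ 3)
    (hp₄ : p₄ = ∑ i, z i ^ 4) (hq5 : q5 = ∑ i, z i ^ 5) (hp₆ : p₆ = ∑ i, z i ^ 6)
    (i : Fin n) :
    (∑ j ∈ univ.erase i, ((-2:ℝ) * z j ^ 2 * p₄ + (1:ℝ) * z j ^ 2 * p₂ ^ 2 + (1:ℝ) * z j ^ 2 * (n:ℝ) * p₄ + (6:ℝ) * z j ^ 3 * p₃ + (-2:ℝ) * z j ^ 3 * (n:ℝ) * p₃ + (-8:ℝ) * z j ^ 4 * p₂ + (2:ℝ) * z j ^ 4 * (n:ℝ) * p₂ + (1:ℝ) * z j ^ 6 + (-1:ℝ) * z j ^ 6 * (n:ℝ) + (4:ℝ) * z i * z j * p₄ + (-2:ℝ) * z i * z j * p₂ ^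 2 + (-2:ℝ) * z i * z j * (n:ℝ) * p₄ + (-10:ℝ) * z i * z j ^ 2 * p₃ + (4:ℝ) * z i * z j ^ 2 * (n:ℝ) * p₃ + (14:ℝ) * z i * z j ^ 3 * p₂ + (-4:ℝ) * z i * z j ^ 3 * (n:ℝ) * p₂ + (-6:ℝ) * z i * z j ^ 5 + (2:ℝ) * z i * z j ^ 5 * (n:ℝ) + (-2:ℝ) * z i ^ 2 * p₄ + (1:ℝ) * z i ^ 2 * p₂ ^ 2 + (1:ℝ) * z i ^ 2 * (n:ℝ) * p₄ + (2:ℝ) * z i ^ 2 * z j * p₃ + (-2:ℝ) * z i ^ 2 * z j * (n:ℝ) * p₃ + (-6:ℝ) * z i ^ 2 * z j ^ 2 * p₂ + (2:ℝ) * z i ^ 2 * z j ^ 2 * (n:ℝ) * p₂ + (15:ℝ) * z i ^ 2 * z j ^ 4 + (-3:ℝ) * z i ^ 2 * z j ^ 4 * (n:ℝ) + (2:ℝ) * z i ^ 3 * p₃ + (2:ℝ) * z i ^ 3 * z j * p₂ + (-20:ℝ) * z i ^ 3 * z j ^ 3 + (6:ℝ) * z i ^ 3 * z j ^ 3 * (n:ℝ)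 + (-2:ℝ) * z i ^ 4 * p₂ + (15:ℝ) * z i ^ 4 * z j ^ 2 + (-7:ℝ) * z i ^ 4 * z j ^ 2 * (n:ℝ) + (-6:ℝ) * z i ^ 5 * z j + (4:ℝ) * z i ^ 5 * z j * (n:ℝ) + (1:ℝ) * z i ^ 6 + (-1:ℝ) * z i ^ 6 * (n:ℝ)))
      = (1:ℝ) * p₆ + (6:ℝ) * p₃ ^ 2 + (-10:ℝ) * p₂ * p₄ + (1:ℝ) * p₂ ^ 3 + (-1:ℝ) * (n:ℝ) * p₆ + (-2:ℝ) * (n:ℝ) * p₃ ^ 2 + (3:ℝ) * (n:ℝ) * p₂ * p₄ + (-6:ℝ) * z i * q5 + (4:ℝ) * z i * p₂ * p₃ + (2:ℝ) * z i * (n:ℝ) * q5 + (15:ℝ) * z i ^ 2 * p₄ + (-6:ℝ) * z i ^ 2 * p₂ ^ 2 + (-5:ℝ) * z i ^ 2 * (n:ℝ) * p₄ + (3:ℝ) * z i ^ 2 * (n:ℝ) * p₂ ^ 2 + (1:ℝ) * z i ^ 2 * (n:ℝ) ^ 2 * p₄ + (-20:ℝ) * z i ^ 3 * p₃ + (8:ℝ)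 * z i ^ 3 * (n:ℝ) * p₃ + (15:ℝ) * z i ^ 4 * p₂ + (-9:ℝ) * z i ^ 4 * (n:ℝ) * p₂ + (1:ℝ) * z i ^ 6 * (n:ℝ) + (-1:ℝ) * z i ^ 6 * (n:ℝ) ^ 2 := by
  rw [Finset.sum_erase_eq_sub (Finset.mem_univ i)]
  have e : (∑ j : Fin n, ((-2:ℝ) * z j ^ 2 * p₄ + (1:ℝ) * z j ^ 2 * p₂ ^ 2 + (1:ℝ) * z j ^ 2 * (n:ℝ) * p₄ + (6:ℝ) * z j ^ 3 * p₃ + (-2:ℝ) * z j ^ 3 * (n:ℝ) * p₃ + (-8:ℝ) * z j ^ 4 * p₂ + (2:ℝ) * z j ^ 4 * (n:ℝ) * p₂ + (1:ℝ) * z j ^ 6 + (-1:ℝ) * z j ^ 6 * (n:ℝ) + (4:ℝ) * z i * z j * p₄ + (-2:ℝ) * z i * z j * p₂ ^ 2 + (-2:ℝ) * z i * z j * (n:ℝ) * p₄ + (-10:ℝ) * z i * z j ^ 2 * p₃ + (4:ℝ) * z i * z j ^ 2 * (n:ℝ) * p₃ + (14:ℝ) * z i * z j ^ 3 * p₂ +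 (-4:ℝ) * z i * z j ^ 3 * (n:ℝ) * p₂ + (-6:ℝ) * z i * z j ^ 5 + (2:ℝ) * z i * z j ^ 5 * (n:ℝ) + (-2:ℝ) * z i ^ 2 * p₄ + (1:ℝ) * z i ^ 2 * p₂ ^ 2 + (1:ℝ) * z i ^ 2 * (n:ℝ) * p₄ + (2:ℝ) * z i ^ 2 * z j * p₃ + (-2:ℝ) * z i ^ 2 * z j * (n:ℝ) * p₃ + (-6:ℝ) * z i ^ 2 * z j ^ 2 * p₂ + (2:ℝ) * z i ^ 2 * z j ^ 2 * (n:ℝ) * p₂ + (15:ℝ) * z i ^ 2 * z j ^ 4 + (-3:ℝ) * z i ^ 2 * z j ^ 4 * (n:ℝ) + (2:ℝ) * z i ^ 3 * p₃ + (2:ℝ) * z i ^ 3 * z j * p₂ + (-20:ℝ) * z i ^ 3 * z j ^ 3 + (6:ℝ) * z i ^ 3 * z j ^ 3 * (n:ℝ) + (-2:ℝ) * z i ^ 4 * p₂ + (15:ℝ) * z i ^ 4 * z j ^ 2 + (-7:ℝ) * z i ^ 4 * z j ^ 2 * (n:ℝ) + (-6:ℝ) * z i ^ 5 * z j + (4:ℝ)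 * z i ^ 5 * z j * (n:ℝ) + (1:ℝ) * z i ^ 6 + (-1:ℝ) * z i ^ 6 * (n:ℝ)))
      = ∑ x : Fin n, (((-2:ℝ) * z i ^ 2 * p₄ + (1:ℝ) * z i ^ 2 * p₂ ^ 2 + (1:ℝ) * z i ^ 2 * (n:ℝ) * p₄ + (2:ℝ) * z i ^ 3 * p₃ + (-2:ℝ) * z i ^ 4 * p₂ + (1:ℝ) * z i ^ 6 + (-1:ℝ) * z i ^ 6 * (n:ℝ)) + ((4:ℝ) * z i * p₄ + (-2:ℝ) * z i * p₂ ^ 2 + (-2:ℝ) * z i * (n:ℝ) * p₄ + (2:ℝ) * z i ^ 2 * p₃ + (-2:ℝ) * z i ^ 2 * (n:ℝ) * p₃ + (2:ℝ) * z i ^ 3 * p₂ + (-6:ℝ) * z i ^ 5 + (4:ℝ) * z i ^ 5 * (n:ℝ)) * z x + ((-2:ℝ) * p₄ + (1:ℝ) * p₂ ^ 2 + (1:ℝ) * (n:ℝ) * p₄ + (-10:ℝ) * z i * p₃ + (4:ℝ) * z i * (n:ℝ) * p₃ + (-6:ℝ) * z i ^ 2 * p₂ + (2:ℝ) * z i ^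 2 * (n:ℝ) * p₂ + (15:ℝ) * z i ^ 4 + (-7:ℝ) * z i ^ 4 * (n:ℝ)) * z x ^ 2 + ((6:ℝ) * p₃ + (-2:ℝ) * (n:ℝ) * p₃ + (14:ℝ) * z i * p₂ + (-4:ℝ) * z i * (n:ℝ) * p₂ + (-20:ℝ) * z i ^ 3 + (6:ℝ) * z i ^ 3 * (n:ℝ)) * z x ^ 3 + ((-8:ℝ) * p₂ + (2:ℝ) * (n:ℝ) * p₂ + (15:ℝ) * z i ^ 2 + (-3:ℝ) * z i ^ 2 * (n:ℝ)) * z x ^ 4 + ((-6:ℝ) * z i + (2:ℝ) * z i * (n:ℝ)) * z x ^ 5 + ((1:ℝ) + (-1:ℝ) * (n:ℝ)) * z x ^ 6) := Finset.sum_congr rfl fun x _ => by ring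
  rw [e, aux_hsum n z hz p₂ p₃ p₄ q5 p₆ hp₂ hp₃ hp₄ hq5 hp₆]
  ring

set_option maxHeartbeats 1000000 in
theorem aux0 (n : ℕ) (z : Fin n → ℝ) (hz : ∑ i, z i = 0)
    (p₂ p₃ p₄ q5 p₆ : ℝ)
    (hp₂ : p₂ = ∑ i, z i ^ 2) (hp₃ : p₃ = ∑ i, z i ^ 3)
    (hp₄ : p₄ = ∑ i, z i ^ 4) (hq5 : q5 = ∑ i, z i ^ 5) (hp₆ : p₆ = ∑ i, z i ^ 6) :
    (∑ i : Fin n, ((1:ℝ) * p₆ + (6:ℝ) * p₃ ^ 2 + (-10:ℝ) * p₂ * p₄ + (1:ℝ) * p₂ ^ 3 + (-1:ℝ) * (n:ℝ) * p₆ + (-2:ℝ) * (n:ℝ) * p₃ ^ 2 + (3:ℝ) * (n:ℝ) * p₂ * p₄ + (-6:ℝ) * z i * q5 + (4:ℝ) * z i * p₂ * p₃ + (2:ℝ) * z i * (n:ℝ) * q5 + (15:ℝ) * z i ^ 2 * p₄ + (-6:ℝ) * z i ^ 2 * p₂ ^ 2 + (-5:ℝ) * z i ^ 2 * (n:ℝ)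 * p₄ + (3:ℝ) * z i ^ 2 * (n:ℝ) * p₂ ^ 2 + (1:ℝ) * z i ^ 2 * (n:ℝ) ^ 2 * p₄ + (-20:ℝ) * z i ^ 3 * p₃ + (8:ℝ) * z i ^ 3 * (n:ℝ) * p₃ + (15:ℝ) * z i ^ 4 * p₂ + (-9:ℝ) * z i ^ 4 * (n:ℝ) * p₂ + (1:ℝ) * z i ^ 6 * (n:ℝ) + (-1:ℝ) * z i ^ 6 * (n:ℝ) ^ 2)) = (-20:ℝ) * p₃ ^ 2 + (30:ℝ) * p₂ * p₄ + (-6:ℝ) * p₂ ^ 3 + (2:ℝ) * (n:ℝ) * p₆ + (14:ℝ) * (n:ℝ) * p₃ ^ 2 + (-24:ℝ) * (n:ℝ) * p₂ * p₄ + (4:ℝ) * (n:ℝ) * p₂ ^ 3 + (-2:ℝ) * (n:ℝ) ^ 2 * p₆ + (-2:ℝ) * (n:ℝ) ^ 2 * p₃ ^ 2 + (4:ℝ) * (n:ℝ) ^ 2 * p₂ * p₄ := by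
  have e : (∑ i : Fin n, ((1:ℝ) * p₆ + (6:ℝ) * p₃ ^ 2 + (-10:ℝ) * p₂ * p₄ + (1:ℝ) * p₂ ^ 3 + (-1:ℝ) * (n:ℝ) * p₆ + (-2:ℝ) * (n:ℝ) * p₃ ^ 2 + (3:ℝ) * (n:ℝ) * p₂ * p₄ + (-6:ℝ) * z i * q5 + (4:ℝ) * z i * p₂ * p₃ + (2:ℝ) * z i * (n:ℝ) * q5 + (15:ℝ) * z i ^ 2 * p₄ + (-6:ℝ) * z i ^ 2 * p₂ ^ 2 + (-5:ℝ) * z i ^ 2 * (n:ℝ) * p₄ + (3:ℝ) * z i ^ 2 * (n:ℝ) * p₂ ^ 2 + (1:ℝ) * z i ^ 2 * (n:ℝ) ^ 2 * p₄ + (-20:ℝ) * z i ^ 3 * p₃ + (8:ℝ) * z i ^ 3 * (n:ℝ) * p₃ + (15:ℝ) * z i ^ 4 * p₂ + (-9:ℝ) * z i ^ 4 * (n:ℝ) * p₂ + (1:ℝ) * z i ^ 6 * (n:ℝ) + (-1:ℝ) * z i ^ 6 * (n:ℝ) ^ 2))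
      = ∑ x : Fin n, (((1:ℝ) * p₆ + (6:ℝ) * p₃ ^ 2 + (-10:ℝ) * p₂ * p₄ + (1:ℝ) * p₂ ^ 3 + (-1:ℝ) * (n:ℝ) * p₆ + (-2:ℝ) * (n:ℝ) * p₃ ^ 2 + (3:ℝ) * (n:ℝ) * p₂ * p₄) + ((-6:ℝ) * q5 + (4:ℝ) * p₂ * p₃ + (2:ℝ) * (n:ℝ) * q5) * z x + ((15:ℝ) * p₄ + (-6:ℝ) * p₂ ^ 2 + (-5:ℝ) * (n:ℝ) * p₄ + (3:ℝ) * (n:ℝ) * p₂ ^ 2 + (1:ℝ) * (n:ℝ) ^ 2 * p₄) * z x ^ 2 + ((-20:ℝ) * p₃ + (8:ℝ) * (n:ℝ) * p₃) * z x ^ 3 + ((15:ℝ) * p₂ + (-9:ℝ) * (n:ℝ) * p₂) * z x ^ 4 + ((0:ℝ)) * z x ^ 5 + ((1:ℝ) * (n:ℝ) + (-1:ℝ) * (n:ℝ) ^ 2) * z x ^ 6) := Finset.sum_congr rfl fun x _ => by ring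
  rw [e, aux_hsum n z hz p₂ p₃ p₄ q5 p₆ hp₂ hp₃ hp₄ hq5 hp₆]
  ring

set_option maxHeartbeats 1000000 in
theorem ordered_path_square_graph_sum
    (n : ℕ) (hn : 1 ≤ n) (z : Fin n → ℝ) (hz : ∑ i, z i = 0)
    (p₂ p₃ p₄ p₆ : ℝ)
    (hp₂ : p₂ = ∑ i, z i ^ 2) (hp₃ : p₃ = ∑ i, z i ^ 3)
    (hp₄ : p₄ = ∑ i, z i ^ 4) (hp₆ : p₆ = ∑ i, z i ^ 6) :
    (∑ f : Fin 4 ↪ Fin n,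
        (z (f 0) - z (f 1)) ^ 2 * (z (f 1) - z (f 2)) ^ 2 * (z (f 2) - z (f 3)) ^ 2)
      = (4 * (n : ℝ) - 6) * p₂ ^ 3 - 2 * ((n : ℝ) - 5) * ((n : ℝ) - 2) * p₃ ^ 2
        + (4 * (n : ℝ) ^ 2 - 24 * (n : ℝ) + 30) * p₂ * p₄
        - 2 * (n : ℝ) * ((n : ℝ) - 1) * p₆ := by
  have hq5 : (∑ i, z i ^ 5) = ∑ i, z i ^ 5 := rfl
  rw [auxA n z, auxB n z]
  rw [Finset.sum_congr rfl fun i _ => Finset.sum_congr rfl fun j hj =>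
    Finset.sum_congr rfl fun k hk =>
      aux3 n z hz p₂ p₃ p₄ (∑ i, z i ^ 5) p₆ hp₂ hp₃ hp₄ rfl hp₆ i j k
        (Finset.mem_erase.mp hj).1
        ((Finset.mem_erase.mp (Finset.mem_erase.mp hk).2).1)
        (Finset.mem_erase.mp hk).1]
  rw [Finset.sum_congr rfl fun i _ => Finset.sum_congr rfl fun j hj =>
    aux2 n z hz p₂ p₃ p₄ (∑ i, z i ^ 5) p₆ hp₂ hp₃ hp₄ rfl hp₆ i j (Finset.mem_erase.mp hj).1]
  rw [Finset.sum_congr rfl fun i _ => aux1 n z hz p₂ p₃ p₄ (∑ i, z i ^ 5) p₆ hp₂ hp₃ hp₄ rfl hp₆ i]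
  rw [aux0 n z hz p₂ p₃ p₄ (∑ i, z i ^ 5) p₆ hp₂ hp₃ hp₄ rfl hp₆]
  ring
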